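/- (Theorem 8(a)) If R̄₀ < 1, then the disease-free equilibrium Y₀* = (B̄/(1−δ_S^S), 0, 0, 0) of the reduced system (21) is globally attracting: every solution with Y(0) ∈ ℝ⁴₊ and S(0)+E(0)+I(0)+R(0) > 0 satisfies S(t) → B̄/(1−δ_S^S), E(t) → 0, I(t) → 0 and R(t) → 0 as t → ∞. -/

import Mathlib

open Finset Filter

lemma denom_pos' {a b c d s e i r : ℝ} (ha : 0 < a) (hb : 0 < b) (hc : 0 < c) (hd : 0 < d)
    (hs : 0 ≤ s) (he : 0 ≤ e) (hi : 0 ≤ i) (hr : 0 ≤ r) (h : 0 < s + e + i + r) :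
    0 < a * s + b * e + c * i + d * r := by
  have h1 := mul_nonneg ha.le hs
  have h2 := mul_nonneg hb.le he
  have h3 := mul_nonneg hc.le hi
  have h4 := mul_nonneg hd.le hr
  rcases hs.lt_or_eq with h' | h'
  · nlinarith [mul_pos ha h']
  · rcases he.lt_or_eq with h' | h'
    · nlinarith [mul_pos hb h']
    · rcases hi.lt_or_eq with h' | h'
      · nlinarith [mul_pos hc h']
      · have : 0 < r := by linarith
        nlinarith [mul_pos hd this]

lemma sum_frac_nonneg {n : ℕ} (σ β mS mE mI mR : Fin n → ℝ) (s e i r : ℝ)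
    (hσ : ∀ j, 0 ≤ σ j) (hβ : ∀ j, 0 ≤ β j)
    (hmS : ∀ j, 0 < mS j) (hmE : ∀ j, 0 < mE j) (hmI : ∀ j, 0 < mI j) (hmR : ∀ j, 0 < mR j)
    (hs : 0 ≤ s) (he : 0 ≤ e) (hi : 0 ≤ i) (hr : 0 ≤ r) (hpos : 0 < s + e + i + r) :
    0 ≤ (∑ j, σ j * β j * mI j * mS j / (mS j * s + mE j * e + mI j * i + mR j * r)) * s * i := by
  apply mul_nonneg (mul_nonneg _ hs) hi
  apply Finset.sum_nonneg
  intro j _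
  have hD := denom_pos' (hmS j) (hmE j) (hmI j) (hmR j) hs he hi hr hpos
  apply div_nonneg _ hD.le
  have := hσ j; have := hβ j; have := (hmI j).le; have := (hmS j).le
  positivity

lemma sum_frac_le_I {n : ℕ} (σ β mS mE mI mR : Fin n → ℝ) (s e i r : ℝ)
    (hσ : ∀ j, 0 ≤ σ j) (hβ : ∀ j, 0 ≤ β j)
    (hmS : ∀ j, 0 < mS j) (hmE : ∀ j, 0 < mE j) (hmI : ∀ j, 0 < mI j) (hmR : ∀ j, 0 < mR j)
    (hs : 0 ≤ s) (he : 0 ≤ e) (hi : 0 ≤ i) (hr : 0 ≤ r) (hpos : 0 < s + e + i + r) :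
    (∑ j, σ j * β j * mI j * mS j / (mS j * s + mE j * e + mI j * i + mR j * r)) * s * i
      ≤ (∑ j, σ j * β j * mI j) * i := by
  rw [Finset.sum_mul, Finset.sum_mul, Finset.sum_mul]
  apply Finset.sum_le_sum
  intro j _
  have hD := denom_pos' (hmS j) (hmE j) (hmI j) (hmR j) hs he hi hr hpos
  rw [div_mul_eq_mul_div, div_mul_eq_mul_div, div_le_iff₀ hD]
  have hp : 0 ≤ σ j * β j * mI j * i :=
    mul_nonneg (mul_nonneg (mul_nonneg (hσ j) (hβ j)) (hmI j).le) hi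
  have hq : 0 ≤ mE j * e + mI j * i + mR j * r := by
    have := mul_nonneg (hmE j).le he
    have := mul_nonneg (hmI j).le hi
    have := mul_nonneg (hmR j).le hr
    linarith
  nlinarith [mul_nonneg hp hq]

lemma sum_frac_le_S {n : ℕ} (σ β mS mE mI mR : Fin n → ℝ) (s e i r : ℝ)
    (hσ : ∀ j, 0 ≤ σ j) (hβ : ∀ j, 0 ≤ β j) (hβ1 : ∀ j, β j ≤ 1)
    (hmS : ∀ j, 0 < mS j) (hmE : ∀ j, 0 < mE j) (hmI : ∀ j, 0 < mI j) (hmR : ∀ j, 0 < mR j)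
    (hs : 0 ≤ s) (he : 0 ≤ e) (hi : 0 ≤ i) (hr : 0 ≤ r) (hpos : 0 < s + e + i + r) :
    (∑ j, σ j * β j * mI j * mS j / (mS j * s + mE j * e + mI j * i + mR j * r)) * s * i
      ≤ (∑ j, σ j * mS j) * s := by
  rw [Finset.sum_mul, Finset.sum_mul, Finset.sum_mul]
  apply Finset.sum_le_sum
  intro j _
  have hD := denom_pos' (hmS j) (hmE j) (hmI j) (hmR j) hs he hi hr hpos
  rw [div_mul_eq_mul_div, div_mul_eq_mul_div, div_le_iff₀ hD]
  have hp : 0 ≤ σ j * mS j * s := mul_nonneg (mul_nonneg (hσ j) (hmS j).le) hs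
  have hβi : β j * (mI j * i) ≤ mI j * i :=
    mul_le_of_le_one_left (mul_nonneg (hmI j).le hi) (hβ1 j)
  have hq : 0 ≤ mS j * s + mE j * e + mI j * i + mR j * r - β j * (mI j * i) := by
    have := mul_nonneg (hmS j).le hs
    have := mul_nonneg (hmE j).le he
    have := mul_nonneg (hmR j).le hr
    linarith
  nlinarith [mul_nonneg hp hq]

lemma tendsto_linear_rec {c L : ℝ} (hc0 : 0 ≤ c) (hc1 : c < 1)
    (x g : ℕ → ℝ) (hrec : ∀ t, x (t + 1) = c * x t + g t)
    (hg : Tendsto g atTop (nhds L)) :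
    Tendsto x atTop (nhds (L / (1 - c))) := by
  have h1c : 0 < 1 - c := by linarith
  set M := L / (1 - c) with hM
  have hML : c * M + L = M := by
    rw [hM]; field_simp; ring
  rw [Metric.tendsto_atTop] at hg ⊢
  intro ε hε
  obtain ⟨T, hT⟩ := hg (ε * (1 - c) / 3) (by positivity)
  have key : ∀ k, |x (T + k) - M| ≤ c ^ k * |x T - M| + ε * (1 - c) / 3 / (1 - c) := by
    intro k
    induction k with
    | zero =>
      simp only [Nat.add_zero, pow_zero, one_mul]
      have : 0 ≤ ε * (1 - c) / 3 / (1 - c) := by positivity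
      linarith
    | succ k ih =>
      have hgk := hT (T + k) (Nat.le_add_right _ _)
      rw [Real.dist_eq] at hgk
      have hx : x (T + (k + 1)) - M = c * (x (T + k) - M) + (g (T + k) - L) := by
        have h := hrec (T + k)
        have : T + (k + 1) = (T + k) + 1 := by ring
        rw [this, h]
        linear_combination hML
      rw [hx]
      calc |c * (x (T + k) - M) + (g (T + k) - L)|
          ≤ |c * (x (T + k) - M)| + |g (T + k) - L| := abs_add_le _ _
        _ ≤ c * |x (T + k) - M| + ε * (1 - c) / 3 := by
            rw [abs_mul, abs_of_nonneg hc0]; linarith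
        _ ≤ c * (c ^ k * |x T - M| + ε * (1 - c) / 3 / (1 - c)) + ε * (1 - c) / 3 :=
            by nlinarith [mul_le_mul_of_nonneg_left ih hc0]
        _ ≤ c ^ (k + 1) * |x T - M| + ε * (1 - c) / 3 / (1 - c) := by
            have h1 : ε * (1 - c) / 3 / (1 - c) = ε / 3 := by field_simp
            rw [h1]
            ring_nf
            nlinarith [hε.le, hc0]
  have h3 : ε * (1 - c) / 3 / (1 - c) = ε / 3 := by field_simp
  rw [h3] at key
  have hA : Tendsto (fun k => c ^ k * |x T - M|) atTop (nhds 0) := by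
    have := tendsto_pow_atTop_nhds_zero_of_lt_one hc0 hc1
    simpa using this.mul_const (|x T - M|)
  rw [Metric.tendsto_atTop] at hA
  obtain ⟨K, hK⟩ := hA (ε / 3) (by positivity)
  refine ⟨T + K, fun t ht => ?_⟩
  have ht' : t = T + (t - T) := by omega
  have hk : K ≤ t - T := by omega
  have h1 := key (t - T)
  have h2 := hK (t - T) hk
  rw [Real.dist_eq, sub_zero] at h2
  have h4 := le_abs_self (c ^ (t - T) * |x T - M|)
  rw [Real.dist_eq, ht']
  linarith

lemma sum_sig_lt_one {n : ℕ} (hne : (Finset.univ : Finset (Fin n)).Nonempty)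
    (σ γ m : Fin n → ℝ) (hσ : ∀ j, σ j ∈ Set.Ioo (0:ℝ) 1) (hγ : ∀ j, γ j ∈ Set.Ioo (0:ℝ) 1)
    (hm : ∀ j, 0 < m j) (hm1 : ∑ j, m j = 1) :
    ∑ j, σ j * (1 - γ j) * m j < 1 := by
  have h : ∑ j, σ j * (1 - γ j) * m j < ∑ j, m j := by
    apply Finset.sum_lt_sum_of_nonempty hne
    intro j _
    have h1 := (hσ j).1; have h2 := (hσ j).2
    have h3 := (hγ j).1; have h4 := (hγ j).2
    have h5 := hm j
    nlinarith [mul_pos (mul_pos h1 h3) h5, mul_lt_mul_of_pos_right h2 h5]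
  rwa [hm1] at h

lemma exists_contraction {dEE dEI dII bI : ℝ} (hdEE0 : 0 ≤ dEE) (hdEE1 : dEE < 1)
    (hdII0 : 0 ≤ dII) (hdII1 : dII < 1) (hdEI : 0 < dEI) (hbI : 0 < bI)
    (hkey : dEI * bI < (1 - dEE) * (1 - dII)) :
    ∃ a b c : ℝ, 0 < a ∧ 0 < b ∧ 0 ≤ c ∧ c < 1 ∧
      a * dEE + b * dEI ≤ c * a ∧ a * bI + b * dII ≤ c * b := by
  set ε := ((1 - dEE) * (1 - dII) - dEI * bI) / (2 * bI) with hεdef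
  have hε : 0 < ε := div_pos (by linarith) (by linarith)
  set a := dEI + ε with hadef
  set b := 1 - dEE with hbdef
  have ha : 0 < a := by positivity
  have hb : 0 < b := by linarith
  set c1 := (a * dEE + b * dEI) / a with hc1def
  set c2 := (a * bI + b * dII) / b with hc2def
  have hc1nn : 0 ≤ c1 := div_nonneg (by nlinarith) ha.le
  have hc1lt : c1 < 1 := by
    rw [hc1def, div_lt_one ha]
    nlinarith [mul_lt_mul_of_pos_left hdEE1 hε]
  have hc2lt : c2 < 1 := by
    rw [hc2def, div_lt_one hb]
    have hεbI : ε * bI = ((1 - dEE) * (1 - dII) - dEI * bI) / 2 := by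
      rw [hεdef]; field_simp; ring
    nlinarith [hkey, hεbI]
  refine ⟨a, b, max c1 c2, ha, hb, le_trans hc1nn (le_max_left _ _),
    max_lt hc1lt hc2lt, ?_, ?_⟩
  · have h1 : a * dEE + b * dEI = c1 * a := (div_mul_cancel₀ _ ha.ne').symm
    rw [h1]
    exact mul_le_mul_of_nonneg_right (le_max_left _ _) ha.le
  · have h1 : a * bI + b * dII = c2 * b := (div_mul_cancel₀ _ hb.ne').symm
    rw [h1]
    exact mul_le_mul_of_nonneg_right (le_max_right _ _) hb.le



open Finset in
/-- Theorem 8(a): if `R̄₀ < 1`, the disease-free equilibrium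
`Y₀* = (B̄/(1-δ_S^S), 0, 0, 0)` of the reduced system (21) attracts every solution
with nonnegative initial data and positive initial total population. -/
theorem reduced_system_DFE_globally_attracting
    (n : ℕ) (hn : 0 < n)
    (B β σS σE σI σR γE γI γR : Fin n → ℝ)
    (hB : ∀ j, 0 < B j) (hβ : ∀ j, β j ∈ Set.Ioc (0:ℝ) 1)
    (hσS : ∀ j, σS j ∈ Set.Ioo (0:ℝ) 1) (hσE : ∀ j, σE j ∈ Set.Ioo (0:ℝ) 1)
    (hσI : ∀ j, σI j ∈ Set.Ioo (0:ℝ) 1) (hσR : ∀ j, σR j ∈ Set.Ioo (0:ℝ) 1)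
    (hγE : ∀ j, γE j ∈ Set.Ioo (0:ℝ) 1) (hγI : ∀ j, γI j ∈ Set.Ioo (0:ℝ) 1)
    (hγR : ∀ j, γR j ∈ Set.Ioo (0:ℝ) 1)
    (mS mE mI mR : Fin n → ℝ)
    (hmS : ∀ j, 0 < mS j) (hmE : ∀ j, 0 < mE j)
    (hmI : ∀ j, 0 < mI j) (hmR : ∀ j, 0 < mR j)
    (hmS1 : ∑ j, mS j = 1) (hmE1 : ∑ j, mE j = 1)
    (hmI1 : ∑ j, mI j = 1) (hmR1 : ∑ j, mR j = 1)
    -- the basic reproduction number R̄₀ = δ_E^I β̄_I / ((1-δ_E^E)(1-δ_I^I)) < 1 :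
    (hR0 : (∑ j, σI j * γE j * mE j) * (∑ j, σE j * β j * mI j) /
        ((1 - ∑ j, σE j * (1 - γE j) * mE j) * (1 - ∑ j, σI j * (1 - γI j) * mI j))
        < 1)
    -- a solution of the reduced system (21) :
    (S E I R : ℕ → ℝ)
    (hS0 : 0 ≤ S 0) (hE0 : 0 ≤ E 0) (hI0 : 0 ≤ I 0) (hR0' : 0 ≤ R 0)
    (hN0 : 0 < S 0 + E 0 + I 0 + R 0)
    (hdynS : ∀ t, S (t+1) = (∑ j, B j) + (∑ j, σS j * γR j * mR j) * R t
        + (∑ j, σS j * mS j) * S t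
        - (∑ j, σS j * β j * mI j * mS j /
            (mS j * S t + mE j * E t + mI j * I t + mR j * R t)) * S t * I t)
    (hdynE : ∀ t, E (t+1) = (∑ j, σE j * β j * mI j * mS j /
            (mS j * S t + mE j * E t + mI j * I t + mR j * R t)) * S t * I t
        + (∑ j, σE j * (1 - γE j) * mE j) * E t)
    (hdynI : ∀ t, I (t+1) = (∑ j, σI j * γE j * mE j) * E t
        + (∑ j, σI j * (1 - γI j) * mI j) * I t)
    (hdynR : ∀ t, R (t+1) = (∑ j, σR j * γI j * mI j) * I t
        + (∑ j, σR j * (1 - γR j) * mR j) * R t) :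
    Filter.Tendsto S Filter.atTop
      (nhds ((∑ j, B j) / (1 - ∑ j, σS j * mS j))) ∧
    Filter.Tendsto E Filter.atTop (nhds 0) ∧
    Filter.Tendsto I Filter.atTop (nhds 0) ∧
    Filter.Tendsto R Filter.atTop (nhds 0) := by
  haveI : Nonempty (Fin n) := Fin.pos_iff_nonempty.mp hn
  have hne : (Finset.univ : Finset (Fin n)).Nonempty := Finset.univ_nonempty
  -- positivity of the various constants
  have hBb : 0 < ∑ j, B j := Finset.sum_pos (fun j _ => hB j) hne
  have hdSS0 : 0 < ∑ j, σS j * mS j :=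
    Finset.sum_pos (fun j _ => mul_pos (hσS j).1 (hmS j)) hne
  have hdSS1 : ∑ j, σS j * mS j < 1 := by
    have h : ∑ j, σS j * mS j < ∑ j, mS j := by
      apply Finset.sum_lt_sum_of_nonempty hne
      intro j _
      nlinarith [(hσS j).2, hmS j, mul_lt_mul_of_pos_right (hσS j).2 (hmS j)]
    rwa [hmS1] at h
  have hdRS0 : 0 ≤ ∑ j, σS j * γR j * mR j :=
    Finset.sum_nonneg fun j _ =>
      mul_nonneg (mul_nonneg (hσS j).1.le (hγR j).1.le) (hmR j).le
  have hdEE0 : 0 ≤ ∑ j, σE j * (1 - γE j) * mE j :=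
    Finset.sum_nonneg fun j _ =>
      mul_nonneg (mul_nonneg (hσE j).1.le (by linarith [(hγE j).2])) (hmE j).le
  have hdEE1 : ∑ j, σE j * (1 - γE j) * mE j < 1 :=
    sum_sig_lt_one hne σE γE mE hσE hγE hmE hmE1
  have hdII0 : 0 ≤ ∑ j, σI j * (1 - γI j) * mI j :=
    Finset.sum_nonneg fun j _ =>
      mul_nonneg (mul_nonneg (hσI j).1.le (by linarith [(hγI j).2])) (hmI j).le
  have hdII1 : ∑ j, σI j * (1 - γI j) * mI j < 1 :=
    sum_sig_lt_one hne σI γI mI hσI hγI hmI hmI1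
  have hdRR0 : 0 ≤ ∑ j, σR j * (1 - γR j) * mR j :=
    Finset.sum_nonneg fun j _ =>
      mul_nonneg (mul_nonneg (hσR j).1.le (by linarith [(hγR j).2])) (hmR j).le
  have hdRR1 : ∑ j, σR j * (1 - γR j) * mR j < 1 :=
    sum_sig_lt_one hne σR γR mR hσR hγR hmR hmR1
  have hdEI0 : 0 < ∑ j, σI j * γE j * mE j :=
    Finset.sum_pos (fun j _ => mul_pos (mul_pos (hσI j).1 (hγE j).1) (hmE j)) hne
  have hbI0 : 0 < ∑ j, σE j * β j * mI j :=
    Finset.sum_pos (fun j _ => mul_pos (mul_pos (hσE j).1 (hβ j).1) (hmI j)) hne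
  -- nonnegativity of the solution
  have key : ∀ t, 0 ≤ S t ∧ 0 ≤ E t ∧ 0 ≤ I t ∧ 0 ≤ R t ∧ 0 < S t + E t + I t + R t := by
    intro t
    induction t with
    | zero => exact ⟨hS0, hE0, hI0, hR0', hN0⟩
    | succ t ih =>
      obtain ⟨hSt, hEt, hIt, hRt, hNt⟩ := ih
      have hFSle := sum_frac_le_S σS β mS mE mI mR (S t) (E t) (I t) (R t)
        (fun j => (hσS j).1.le) (fun j => (hβ j).1.le) (fun j => (hβ j).2)
        hmS hmE hmI hmR hSt hEt hIt hRt hNt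
      have hFEnn := sum_frac_nonneg σE β mS mE mI mR (S t) (E t) (I t) (R t)
        (fun j => (hσE j).1.le) (fun j => (hβ j).1.le)
        hmS hmE hmI hmR hSt hEt hIt hRt hNt
      have hS' : 0 < S (t+1) := by
        rw [hdynS t]
        have h1 : 0 ≤ (∑ j, σS j * γR j * mR j) * R t := mul_nonneg hdRS0 hRt
        linarith
      have hE' : 0 ≤ E (t+1) := by
        rw [hdynE t]
        have h2 : 0 ≤ (∑ j, σE j * (1 - γE j) * mE j) * E t := mul_nonneg hdEE0 hEt
        linarith
      have hI' : 0 ≤ I (t+1) := by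
        rw [hdynI t]
        have h1 : 0 ≤ (∑ j, σI j * γE j * mE j) * E t := mul_nonneg hdEI0.le hEt
        have h2 : 0 ≤ (∑ j, σI j * (1 - γI j) * mI j) * I t := mul_nonneg hdII0 hIt
        linarith
      have hR' : 0 ≤ R (t+1) := by
        rw [hdynR t]
        have h1 : 0 ≤ (∑ j, σR j * γI j * mI j) * I t :=
          mul_nonneg (Finset.sum_nonneg fun j _ =>
            mul_nonneg (mul_nonneg (hσR j).1.le (hγI j).1.le) (hmI j).le) hIt
        have h2 : 0 ≤ (∑ j, σR j * (1 - γR j) * mR j) * R t := mul_nonneg hdRR0 hRt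
        linarith
      exact ⟨hS'.le, hE', hI', hR', by linarith⟩
  have hSt : ∀ t, 0 ≤ S t := fun t => (key t).1
  have hEt : ∀ t, 0 ≤ E t := fun t => (key t).2.1
  have hIt : ∀ t, 0 ≤ I t := fun t => (key t).2.2.1
  have hRt : ∀ t, 0 ≤ R t := fun t => (key t).2.2.2.1
  have hNt : ∀ t, 0 < S t + E t + I t + R t := fun t => (key t).2.2.2.2
  -- the R0 condition
  have hkey : (∑ j, σI j * γE j * mE j) * (∑ j, σE j * β j * mI j)
      < (1 - ∑ j, σE j * (1 - γE j) * mE j) * (1 - ∑ j, σI j * (1 - γI j) * mI j) := by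
    have hden : 0 < (1 - ∑ j, σE j * (1 - γE j) * mE j) * (1 - ∑ j, σI j * (1 - γI j) * mI j) :=
      mul_pos (by linarith) (by linarith)
    exact (div_lt_one hden).mp hR0
  -- contraction constants
  obtain ⟨a, b, c, ha, hb, hc0, hc1, hcon1, hcon2⟩ :
      ∃ a b c : ℝ, 0 < a ∧ 0 < b ∧ 0 ≤ c ∧ c < 1 ∧
        a * (∑ j, σE j * (1 - γE j) * mE j) + b * (∑ j, σI j * γE j * mE j) ≤ c * a ∧
        a * (∑ j, σE j * β j * mI j) + b * (∑ j, σI j * (1 - γI j) * mI j) ≤ c * b :=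
    exists_contraction hdEE0 hdEE1 hdII0 hdII1 hdEI0 hbI0 hkey
  -- contraction of V = aE + bI
  have hV : ∀ t, a * E (t+1) + b * I (t+1) ≤ c * (a * E t + b * I t) := by
    intro t
    have hFEle := sum_frac_le_I σE β mS mE mI mR (S t) (E t) (I t) (R t)
      (fun j => (hσE j).1.le) (fun j => (hβ j).1.le)
      hmS hmE hmI hmR (hSt t) (hEt t) (hIt t) (hRt t) (hNt t)
    rw [hdynE t, hdynI t]
    have m1 := mul_le_mul_of_nonneg_left hFEle ha.le
    have m2 := mul_le_mul_of_nonneg_right hcon1 (hEt t)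
    have m3 := mul_le_mul_of_nonneg_right hcon2 (hIt t)
    linarith [m1, m2, m3]
  have hVgeo : ∀ t, a * E t + b * I t ≤ c ^ t * (a * E 0 + b * I 0) := by
    intro t
    induction t with
    | zero => simp
    | succ t ih =>
      calc a * E (t+1) + b * I (t+1) ≤ c * (a * E t + b * I t) := hV t
        _ ≤ c * (c ^ t * (a * E 0 + b * I 0)) := mul_le_mul_of_nonneg_left ih hc0
        _ = c ^ (t+1) * (a * E 0 + b * I 0) := by ring
  have hVnn : ∀ t, 0 ≤ a * E t + b * I t := fun t =>
    add_nonneg (mul_nonneg ha.le (hEt t)) (mul_nonneg hb.le (hIt t))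
  have hpow : Filter.Tendsto (fun t => c ^ t * (a * E 0 + b * I 0)) Filter.atTop (nhds 0) := by
    have := tendsto_pow_atTop_nhds_zero_of_lt_one hc0 hc1
    simpa using this.mul_const (a * E 0 + b * I 0)
  have hVlim : Filter.Tendsto (fun t => a * E t + b * I t) Filter.atTop (nhds 0) :=
    squeeze_zero hVnn hVgeo hpow
  have hElim : Filter.Tendsto E Filter.atTop (nhds 0) := by
    apply squeeze_zero hEt (fun t => ?_) (by simpa using hVlim.const_mul a⁻¹)
    have h1 : a⁻¹ * (a * E t + b * I t) = E t + a⁻¹ * (b * I t) := by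
      field_simp
    have h2 : 0 ≤ a⁻¹ * (b * I t) :=
      mul_nonneg (inv_nonneg.mpr ha.le) (mul_nonneg hb.le (hIt t))
    linarith
  have hIlim : Filter.Tendsto I Filter.atTop (nhds 0) := by
    apply squeeze_zero hIt (fun t => ?_) (by simpa using hVlim.const_mul b⁻¹)
    have h1 : b⁻¹ * (a * E t + b * I t) = I t + b⁻¹ * (a * E t) := by
      field_simp; ring
    have h2 : 0 ≤ b⁻¹ * (a * E t) :=
      mul_nonneg (inv_nonneg.mpr hb.le) (mul_nonneg ha.le (hEt t))
    linarith
  have hRlim : Filter.Tendsto R Filter.atTop (nhds 0) := by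
    have h := tendsto_linear_rec hdRR0 hdRR1 R (fun t => (∑ j, σR j * γI j * mI j) * I t)
      (fun t => by rw [hdynR t]; ring)
      (by simpa using hIlim.const_mul (∑ j, σR j * γI j * mI j))
    simpa using h
  have hFSlim : Filter.Tendsto (fun t => (∑ j, σS j * β j * mI j * mS j /
      (mS j * S t + mE j * E t + mI j * I t + mR j * R t)) * S t * I t)
      Filter.atTop (nhds 0) := by
    apply squeeze_zero
      (fun t => sum_frac_nonneg σS β mS mE mI mR (S t) (E t) (I t) (R t)
        (fun j => (hσS j).1.le) (fun j => (hβ j).1.le)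
        hmS hmE hmI hmR (hSt t) (hEt t) (hIt t) (hRt t) (hNt t))
      (fun t => sum_frac_le_I σS β mS mE mI mR (S t) (E t) (I t) (R t)
        (fun j => (hσS j).1.le) (fun j => (hβ j).1.le)
        hmS hmE hmI hmR (hSt t) (hEt t) (hIt t) (hRt t) (hNt t))
      (by simpa using hIlim.const_mul (∑ j, σS j * β j * mI j))
  have hglim : Filter.Tendsto (fun t => (∑ j, B j) + (∑ j, σS j * γR j * mR j) * R t
      - (∑ j, σS j * β j * mI j * mS j /
          (mS j * S t + mE j * E t + mI j * I t + mR j * R t)) * S t * I t)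
      Filter.atTop (nhds (∑ j, B j)) := by
    have h1 : Filter.Tendsto (fun t => (∑ j, σS j * γR j * mR j) * R t)
        Filter.atTop (nhds 0) := by
      simpa using hRlim.const_mul (∑ j, σS j * γR j * mR j)
    have h := (h1.const_add (∑ j, B j)).sub hFSlim
    simpa using h
  have hSlim := tendsto_linear_rec hdSS0.le hdSS1 S _
    (fun t => by rw [hdynS t]; ring) hglim
  exact ⟨hSlim, hElim, hIlim, hRlim⟩
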